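/- Let W be an r×r real symmetric positive definite matrix, let U ∈ St(r,p) and let U⊥ be an orthonormal completion of U. Let P ∈ ℝ^{r×r} be invertible and set Y := UP. Let S ∈ ℝ^{r×r} be such that S P⁻ᵀ W P⁻¹ is symmetric, let D ∈ ℝ^{(p−r)×r}, and set θ := (US + U⊥D) P⁻ᵀ. Then 2·λmin(P W⁻¹ Pᵀ)·tr(W θᵀθ) ≤ ‖Yθᵀ + θYᵀ‖_F² ≤ 4·λmax(P W⁻¹ Pᵀ)·tr(W θᵀθ). -/

import Mathlib

open Matrix

/-- The smallest eigenvalue of a (Hermitian) real matrix; junk value `0` otherwise. -/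
noncomputable def eigMin {n : ℕ} (M : Matrix (Fin n) (Fin n) ℝ) : ℝ := by
  classical exact if h : M.IsHermitian then ⨅ i, h.eigenvalues i else 0

/-- The largest eigenvalue of a (Hermitian) real matrix; junk value `0` otherwise. -/
noncomputable def eigMax {n : ℕ} (M : Matrix (Fin n) (Fin n) ℝ) : ℝ := by
  classical exact if h : M.IsHermitian then ⨆ i, h.eigenvalues i else 0

/-- The squared Frobenius norm `‖A‖_F² = tr(AᵀA)`. -/
noncomputable def frobSq {m n : ℕ} (A : Matrix (Fin m) (Fin n) ℝ) : ℝ :=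
  Matrix.trace (Aᵀ * A)

/-- Spectrum bounds for the map `θ ↦ Yθᵀ + θYᵀ` on the horizontal space of the full-rank
quotient geometry on fixed-rank PSD matrices:
`2·λmin(PW⁻¹Pᵀ)·tr(Wθᵀθ) ≤ ‖Yθᵀ + θYᵀ‖_F² ≤ 4·λmax(PW⁻¹Pᵀ)·tr(Wθᵀθ)`. -/
private lemma trace_psd_nonneg {n : ℕ} {X : Matrix (Fin n) (Fin n) ℝ} (hX : X.PosSemidef) :
    0 ≤ X.trace := by
  rw [Matrix.trace]
  refine Finset.sum_nonneg fun i _ => ?_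
  have h := hX.diag_nonneg (i := i)
  simpa using h

private lemma trace_psd_mul_nonneg {n : ℕ} {X Y : Matrix (Fin n) (Fin n) ℝ}
    (hX : X.PosSemidef) (hY : Y.PosSemidef) : 0 ≤ (X * Y).trace := by
  obtain ⟨B, rfl⟩ := by open scoped MatrixOrder in exact CStarAlgebra.nonneg_iff_eq_star_mul_self.mp hX.nonneg
  rw [Matrix.mul_assoc, Matrix.trace_mul_comm]
  exact trace_psd_nonneg (hY.mul_mul_conjTranspose_same B)

private lemma herm_sub_smul_psd {n : ℕ} {A : Matrix (Fin n) (Fin n) ℝ} (hA : A.IsHermitian)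
    {c : ℝ} (hc : ∀ i, c ≤ hA.eigenvalues i) : (A - c • 1).PosSemidef := by
  have hu : (hA.eigenvectorUnitary : Matrix (Fin n) (Fin n) ℝ) *
      (star (hA.eigenvectorUnitary : Matrix (Fin n) (Fin n) ℝ)) = 1 :=
    (Matrix.mem_unitaryGroup_iff).mp (hA.eigenvectorUnitary).2
  have hgoal : A - c • 1 = (hA.eigenvectorUnitary : Matrix (Fin n) (Fin n) ℝ) *
      diagonal (fun i => hA.eigenvalues i - c) *
      (star (hA.eigenvectorUnitary : Matrix (Fin n) (Fin n) ℝ)) := by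
    have hsp := hA.spectral_theorem; rw [Unitary.conjStarAlgAut_apply] at hsp
    have hd : diagonal (fun i => hA.eigenvalues i - c) =
        diagonal (RCLike.ofReal ∘ hA.eigenvalues) - c • (1 : Matrix (Fin n) (Fin n) ℝ) := by
      rw [Matrix.smul_one_eq_diagonal, ← Matrix.diagonal_sub]; rfl
    rw [hd, Matrix.mul_sub, Matrix.sub_mul, ← hsp, Matrix.mul_smul, Matrix.smul_mul,
      Matrix.mul_one, hu]
  rw [hgoal, Matrix.star_eq_conjTranspose]
  exact (Matrix.PosSemidef.diagonal (fun i => sub_nonneg.2 (hc i))).mul_mul_conjTranspose_same _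

private lemma herm_smul_sub_psd {n : ℕ} {A : Matrix (Fin n) (Fin n) ℝ} (hA : A.IsHermitian)
    {c : ℝ} (hc : ∀ i, hA.eigenvalues i ≤ c) : (c • 1 - A).PosSemidef := by
  have hu : (hA.eigenvectorUnitary : Matrix (Fin n) (Fin n) ℝ) *
      (star (hA.eigenvectorUnitary : Matrix (Fin n) (Fin n) ℝ)) = 1 :=
    (Matrix.mem_unitaryGroup_iff).mp (hA.eigenvectorUnitary).2
  have hgoal : c • 1 - A = (hA.eigenvectorUnitary : Matrix (Fin n) (Fin n) ℝ) *
      diagonal (fun i => c - hA.eigenvalues i) *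
      (star (hA.eigenvectorUnitary : Matrix (Fin n) (Fin n) ℝ)) := by
    have hsp := hA.spectral_theorem; rw [Unitary.conjStarAlgAut_apply] at hsp
    have hd : diagonal (fun i => c - hA.eigenvalues i) =
        c • (1 : Matrix (Fin n) (Fin n) ℝ) - diagonal (RCLike.ofReal ∘ hA.eigenvalues) := by
      rw [Matrix.smul_one_eq_diagonal, ← Matrix.diagonal_sub]; rfl
    rw [hd, Matrix.mul_sub, Matrix.sub_mul, ← hsp, Matrix.mul_smul, Matrix.smul_mul,
      Matrix.mul_one, hu]
  rw [hgoal, Matrix.star_eq_conjTranspose]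
  exact (Matrix.PosSemidef.diagonal (fun i => sub_nonneg.2 (hc i))).mul_mul_conjTranspose_same _

private lemma eig_trace_bounds {n : ℕ} {Rm X : Matrix (Fin n) (Fin n) ℝ}
    (hR : Rm.IsHermitian) (hX : X.PosSemidef) :
    eigMin Rm * X.trace ≤ (X * Rm).trace ∧ (X * Rm).trace ≤ eigMax Rm * X.trace := by
  constructor
  · have h1 : (Rm - eigMin Rm • 1).PosSemidef := herm_sub_smul_psd hR (fun i => by
      unfold eigMin; rw [dif_pos hR]
      exact ciInf_le (Set.finite_range _).bddBelow i)
    have h2 := trace_psd_mul_nonneg hX h1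
    rw [Matrix.mul_sub, Matrix.trace_sub, Matrix.mul_smul, Matrix.mul_one,
      Matrix.trace_smul, smul_eq_mul] at h2
    linarith
  · have h1 : (eigMax Rm • 1 - Rm).PosSemidef := herm_smul_sub_psd hR (fun i => by
      unfold eigMax; rw [dif_pos hR]
      exact le_ciSup (Set.finite_range _).bddAbove i)
    have h2 := trace_psd_mul_nonneg hX h1
    rw [Matrix.mul_sub, Matrix.trace_sub, Matrix.mul_smul, Matrix.mul_one,
      Matrix.trace_smul, smul_eq_mul] at h2
    linarith

private lemma eigMax_nonneg {n : ℕ} {Rm : Matrix (Fin n) (Fin n) ℝ} (hR : Rm.PosSemidef) :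
    0 ≤ eigMax Rm := by
  unfold eigMax; rw [dif_pos hR.isHermitian]
  rcases Nat.eq_zero_or_pos n with h | h
  · subst h; simp [Real.iSup_of_isEmpty]
  · exact le_trans (hR.eigenvalues_nonneg ⟨0, h⟩)
      (le_ciSup (Set.finite_range _).bddAbove (⟨0, h⟩ : Fin n))

theorem stmt10 {p r : ℕ}
    (W : Matrix (Fin r) (Fin r) ℝ) (hW : W.PosDef)
    (U : Matrix (Fin p) (Fin r) ℝ) (Uperp : Matrix (Fin p) (Fin (p - r)) ℝ)
    (hU : Uᵀ * U = 1) (hUperp : Uperpᵀ * Uperp = 1) (hUUperp : Uᵀ * Uperp = 0)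
    (P : Matrix (Fin r) (Fin r) ℝ) (hP : IsUnit P)
    (Y : Matrix (Fin p) (Fin r) ℝ) (hY : Y = U * P)
    (S : Matrix (Fin r) (Fin r) ℝ) (hS : (S * (P⁻¹)ᵀ * W * P⁻¹).IsSymm)
    (D : Matrix (Fin (p - r)) (Fin r) ℝ)
    (θ : Matrix (Fin p) (Fin r) ℝ) (hθ : θ = (U * S + Uperp * D) * (P⁻¹)ᵀ) :
    2 * eigMin (P * W⁻¹ * Pᵀ) * Matrix.trace (W * θᵀ * θ) ≤ frobSq (Y * θᵀ + θ * Yᵀ) ∧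
    frobSq (Y * θᵀ + θ * Yᵀ) ≤ 4 * eigMax (P * W⁻¹ * Pᵀ) * Matrix.trace (W * θᵀ * θ) := by
  classical
  subst hY; subst hθ
  -- basic invertibility facts
  have hWdet : IsUnit W.det := (Matrix.isUnit_iff_isUnit_det W).mp hW.isUnit
  have hPdet : IsUnit P.det := (Matrix.isUnit_iff_isUnit_det P).mp hP
  have hWW : W * W⁻¹ = 1 := Matrix.mul_nonsing_inv W hWdet
  have hPP : P * P⁻¹ = 1 := Matrix.mul_nonsing_inv P hPdet
  have hPP' : P⁻¹ * P = 1 := Matrix.nonsing_inv_mul P hPdet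
  have hPt : (P⁻¹)ᵀ * Pᵀ = 1 := by rw [← Matrix.transpose_mul, hPP, Matrix.transpose_one]
  have hPt' : Pᵀ * (P⁻¹)ᵀ = 1 := by rw [← Matrix.transpose_mul, hPP', Matrix.transpose_one]
  have hWsym : Wᵀ = W := by
    have h := hW.isHermitian
    rwa [Matrix.IsHermitian, Matrix.conjTranspose_eq_transpose_of_trivial] at h
  -- cancellation helpers
  have cPP : ∀ {k} (M : Matrix (Fin r) (Fin k) ℝ), P * (P⁻¹ * M) = M := fun M => by
    rw [← Matrix.mul_assoc, hPP, Matrix.one_mul]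
  have cP'P : ∀ {k} (M : Matrix (Fin r) (Fin k) ℝ), P⁻¹ * (P * M) = M := fun M => by
    rw [← Matrix.mul_assoc, hPP', Matrix.one_mul]
  have cPt : ∀ {k} (M : Matrix (Fin r) (Fin k) ℝ), (P⁻¹)ᵀ * (Pᵀ * M) = M := fun M => by
    rw [← Matrix.mul_assoc, hPt, Matrix.one_mul]
  have cWW : ∀ {k} (M : Matrix (Fin r) (Fin k) ℝ), W * (W⁻¹ * M) = M := fun M => by
    rw [← Matrix.mul_assoc, hWW, Matrix.one_mul]
  have cU : ∀ {k} (M : Matrix (Fin r) (Fin k) ℝ), Uᵀ * (U * M) = M := fun M => by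
    rw [← Matrix.mul_assoc, hU, Matrix.one_mul]
  have cUp : ∀ {k} (M : Matrix (Fin (p-r)) (Fin k) ℝ), Uperpᵀ * (Uperp * M) = M := fun M => by
    rw [← Matrix.mul_assoc, hUperp, Matrix.one_mul]
  have hUpU : Uperpᵀ * U = 0 := by
    have := congrArg Matrix.transpose hUUperp
    simpa [Matrix.transpose_mul] using this
  have cUUp : ∀ {k} (M : Matrix (Fin (p-r)) (Fin k) ℝ), Uᵀ * (Uperp * M) = 0 := fun M => by
    rw [← Matrix.mul_assoc, hUUperp, Matrix.zero_mul]
  have cUpU : ∀ {k} (M : Matrix (Fin r) (Fin k) ℝ), Uperpᵀ * (U * M) = 0 := fun M => by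
    rw [← Matrix.mul_assoc, hUpU, Matrix.zero_mul]
  -- Q and Rm
  set Rm : Matrix (Fin r) (Fin r) ℝ := P * W⁻¹ * Pᵀ with hRdef
  set Q : Matrix (Fin r) (Fin r) ℝ := (P⁻¹)ᵀ * (W * P⁻¹) with hQdef
  have hQR : Q * Rm = 1 := by
    rw [hQdef, hRdef]
    calc (P⁻¹)ᵀ * (W * P⁻¹) * (P * W⁻¹ * Pᵀ)
        = (P⁻¹)ᵀ * (W * (P⁻¹ * (P * (W⁻¹ * Pᵀ)))) := by simp only [Matrix.mul_assoc]
      _ = (P⁻¹)ᵀ * Pᵀ := by rw [cP'P, cWW]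
      _ = 1 := hPt
  have hQpsd : Q.PosSemidef := by
    have h := hW.posSemidef.conjTranspose_mul_mul_same (P⁻¹)
    rwa [Matrix.conjTranspose_eq_transpose_of_trivial, Matrix.mul_assoc] at h
  have hRpsd : Rm.PosSemidef := by
    have h := (hW.inv).posSemidef.mul_mul_conjTranspose_same P
    rwa [Matrix.conjTranspose_eq_transpose_of_trivial] at h
  have hQdetu : IsUnit Q.det := by
    have h := congrArg Matrix.det hQR
    rw [Matrix.det_mul, Matrix.det_one] at h
    exact IsUnit.of_mul_eq_one _ h
  have hQRm : Q⁻¹ = Rm := Matrix.inv_eq_right_inv hQR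
  -- G = sqrt Q, H = G⁻¹
  set G : Matrix (Fin r) (Fin r) ℝ := (open scoped MatrixOrder in CFC.sqrt Q) with hGdef
  have hGG : G * G = Q := by open scoped MatrixOrder in exact CFC.sqrt_mul_sqrt_self Q hQpsd.nonneg
  have hGsm : Gᵀ = G := by
    have h : G.IsHermitian := by open scoped MatrixOrder in exact (CFC.sqrt_nonneg Q).posSemidef.isHermitian
    rwa [Matrix.IsHermitian, Matrix.conjTranspose_eq_transpose_of_trivial] at h
  have hGdet : IsUnit G.det := by
    have h : G.det * G.det = Q.det := by rw [← Matrix.det_mul, hGG]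
    exact isUnit_of_mul_isUnit_left (h ▸ hQdetu)
  set H : Matrix (Fin r) (Fin r) ℝ := G⁻¹ with hHdef
  have hGH : G * H = 1 := Matrix.mul_nonsing_inv G hGdet
  have hHG : H * G = 1 := Matrix.nonsing_inv_mul G hGdet
  have hHsm : Hᵀ = H := by rw [hHdef, Matrix.transpose_nonsing_inv, hGsm]
  have hHH : H * H = Rm := by rw [← hQRm, ← hGG, Matrix.mul_inv_rev]
  have cGH : ∀ {k} (M : Matrix (Fin r) (Fin k) ℝ), G * (H * M) = M := fun M => by
    rw [← Matrix.mul_assoc, hGH, Matrix.one_mul]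
  have cHG : ∀ {k} (M : Matrix (Fin r) (Fin k) ℝ), H * (G * M) = M := fun M => by
    rw [← Matrix.mul_assoc, hHG, Matrix.one_mul]
  -- the symmetric B with S = G * (B * H)
  set B : Matrix (Fin r) (Fin r) ℝ := H * (S * G) with hBdef
  have hQsm : Qᵀ = Q := by
    rw [hQdef]
    simp only [Matrix.transpose_mul, Matrix.transpose_transpose, hWsym, Matrix.mul_assoc]
  have hQS : Q * Sᵀ = S * Q := by
    calc Q * Sᵀ = (S * (P⁻¹)ᵀ * W * P⁻¹)ᵀ := by
          simp only [hQdef, Matrix.transpose_mul, Matrix.transpose_transpose, hWsym,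
            Matrix.mul_assoc]
      _ = S * (P⁻¹)ᵀ * W * P⁻¹ := hS
      _ = S * Q := by simp only [hQdef, Matrix.mul_assoc]
  have hGGSt : (G * G) * Sᵀ = S * (G * G) := by rw [hGG]; exact hQS
  have hBsym : G * (Sᵀ * H) = H * (S * G) := by
    have key : G * (G * (Sᵀ * H)) = G * (H * (S * G)) := by
      calc G * (G * (Sᵀ * H)) = ((G * G) * Sᵀ) * H := by simp only [Matrix.mul_assoc]
        _ = (S * (G * G)) * H := by rw [hGGSt]
        _ = G * (H * (S * G)) := by
            simp only [Matrix.mul_assoc, cGH, cHG, hGH, hHG, Matrix.mul_one]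
    have h2 := congrArg (fun M => H * M) key
    simpa only [cHG] using h2
  have hBt : Bᵀ = B := by
    rw [hBdef]
    calc (H * (S * G))ᵀ = G * (Sᵀ * H) := by
          simp only [Matrix.transpose_mul, hGsm, hHsm, Matrix.mul_assoc]
    _ = H * (S * G) := hBsym
  have hSGB : G * (B * H) = S := by
    rw [hBdef]
    simp only [Matrix.mul_assoc, cGH, cHG, hGH, hHG, Matrix.mul_one]
  have hSt : Sᵀ = H * (B * G) := by
    conv_lhs => rw [← hSGB]
    simp only [Matrix.transpose_mul, hGsm, hHsm, hBt, Matrix.mul_assoc]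
  -- canonical scalars
  set N : Matrix (Fin r) (Fin r) ℝ := G * B with hNdef
  set L : Matrix (Fin (p-r)) (Fin r) ℝ := D * G with hLdef
  have hNt : Nᴴ = B * G := by
    rw [hNdef, Matrix.conjTranspose_eq_transpose_of_trivial, Matrix.transpose_mul, hGsm, hBt]
  have hLt : Lᴴ = G * Dᵀ := by
    rw [hLdef, Matrix.conjTranspose_eq_transpose_of_trivial, Matrix.transpose_mul, hGsm]
  -- scalar abbreviations
  have psdNtN : (Nᴴ * N).PosSemidef := Matrix.posSemidef_conjTranspose_mul_self N
  have psdNNt : (N * Nᴴ).PosSemidef := Matrix.posSemidef_self_mul_conjTranspose N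
  have psdLtL : (Lᴴ * L).PosSemidef := Matrix.posSemidef_conjTranspose_mul_self L
  have hRh : Rm.IsHermitian := hRpsd.isHermitian
  -- bounds from the generic lemma
  have bNtN := eig_trace_bounds hRh psdNtN
  have bNNt := eig_trace_bounds hRh psdNNt
  have bLtL := eig_trace_bounds hRh psdLtL
  have cNtN := trace_psd_nonneg psdNtN
  have cLtL := trace_psd_nonneg psdLtL
  have hMax := eigMax_nonneg hRpsd
  -- identify the traces
  -- a := trace((NᴴN)Rm), c := trace(NᴴN), tBB := trace(B*B), e := trace(LᴴL), d=trace((LᴴL)Rm)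
  have idc : (Nᴴ * N).trace = (B * (G * (G * B))).trace := by
    rw [hNt, hNdef]; simp only [Matrix.mul_assoc]
  have ida : ((Nᴴ * N) * Rm).trace = (B * (G * (G * (B * (H * H))))).trace := by
    rw [hNt, hNdef, ← hHH]; simp only [Matrix.mul_assoc]
  have idc2 : (N * Nᴴ).trace = (B * (G * (G * B))).trace := by
    rw [Matrix.trace_mul_comm, idc]
  have idb : ((N * Nᴴ) * Rm).trace = (B * B).trace := by
    rw [hNt, hNdef, ← hHH]
    rw [show G * B * (B * G) * (H * H) = G * (B * (B * (G * (H * H)))) from by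
      simp only [Matrix.mul_assoc]]
    rw [Matrix.trace_mul_comm]
    simp only [Matrix.mul_assoc, hGH, hHG, Matrix.mul_one, cGH, cHG]
  have ide : (Lᴴ * L).trace = (G * (Dᵀ * (D * G))).trace := by
    rw [hLt, hLdef]; simp only [Matrix.mul_assoc]
  have idd : ((Lᴴ * L) * Rm).trace = (Dᵀ * D).trace := by
    rw [hLt, hLdef, ← hHH]
    rw [show G * Dᵀ * (D * G) * (H * H) = G * (Dᵀ * (D * (G * (H * H)))) from by
      simp only [Matrix.mul_assoc]]
    rw [Matrix.trace_mul_comm]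
    simp only [Matrix.mul_assoc, hGH, hHG, Matrix.mul_one]
  -- trace(W θᵀ θ) = trace((SᵀS)Q) + trace((DᵀD)Q) = c + e
  have hθθ : ((U * S + Uperp * D) * (P⁻¹)ᵀ)ᵀ * ((U * S + Uperp * D) * (P⁻¹)ᵀ)
      = P⁻¹ * ((Sᵀ * S + Dᵀ * D) * (P⁻¹)ᵀ) := by
    simp only [Matrix.transpose_add, Matrix.transpose_mul, Matrix.transpose_transpose,
      Matrix.mul_add, Matrix.add_mul, Matrix.mul_assoc, cU, cUp, cUUp, cUpU,
      Matrix.mul_zero, Matrix.zero_mul, add_zero, zero_add]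
  have hT : (W * ((U * S + Uperp * D) * (P⁻¹)ᵀ)ᵀ * ((U * S + Uperp * D) * (P⁻¹)ᵀ)).trace
      = ((Sᵀ * S) * Q).trace + ((Dᵀ * D) * Q).trace := by
    rw [Matrix.mul_assoc, hθθ]
    rw [show W * (P⁻¹ * ((Sᵀ * S + Dᵀ * D) * (P⁻¹)ᵀ)) =
      (W * (P⁻¹ * ((Sᵀ * S + Dᵀ * D)))) * (P⁻¹)ᵀ from by simp only [Matrix.mul_assoc]]
    rw [Matrix.trace_mul_comm]
    rw [show (P⁻¹)ᵀ * (W * (P⁻¹ * (Sᵀ * S + Dᵀ * D))) = Q * (Sᵀ * S + Dᵀ * D) from by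
      rw [hQdef]; simp only [Matrix.mul_assoc]]
    rw [Matrix.mul_add, Matrix.trace_add, Matrix.trace_mul_comm Q (Sᵀ * S),
      Matrix.trace_mul_comm Q (Dᵀ * D)]
  have idSS : ((Sᵀ * S) * Q).trace = (B * (G * (G * B))).trace := by
    rw [hSt, ← hSGB, ← hGG]
    rw [show H * (B * G) * (G * (B * H)) * (G * G) =
      H * (B * (G * (G * (B * (H * (G * G)))))) from by simp only [Matrix.mul_assoc]]
    rw [Matrix.trace_mul_comm]
    simp only [Matrix.mul_assoc, hGH, hHG, Matrix.mul_one, cGH, cHG]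
  have idDD : ((Dᵀ * D) * Q).trace = (G * (Dᵀ * (D * G))).trace := by
    rw [← hGG]
    rw [show (Dᵀ * D) * (G * G) = (Dᵀ * (D * G)) * G from by simp only [Matrix.mul_assoc]]
    rw [Matrix.trace_mul_comm]
  -- frobSq computation
  set E : Matrix (Fin r) (Fin p) ℝ := (S + Sᵀ) * Uᵀ + Dᵀ * Uperpᵀ with hEdef
  set F : Matrix (Fin (p-r)) (Fin p) ℝ := D * Uᵀ with hFdef
  have hZ : U * P * ((U * S + Uperp * D) * (P⁻¹)ᵀ)ᵀ + (U * S + Uperp * D) * (P⁻¹)ᵀ * (U * P)ᵀ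
      = U * E + Uperp * F := by
    rw [hEdef, hFdef]
    simp only [Matrix.transpose_add, Matrix.transpose_mul, Matrix.transpose_transpose,
      Matrix.mul_add, Matrix.add_mul, Matrix.mul_assoc, cPP, cPt]
    abel
  have h1 : (U * E + Uperp * F)ᵀ * (U * E + Uperp * F) = Eᵀ * E + Fᵀ * F := by
    simp only [Matrix.transpose_add, Matrix.transpose_mul, Matrix.mul_add, Matrix.add_mul,
      Matrix.mul_assoc, cU, cUp, cUUp, cUpU, Matrix.mul_zero, Matrix.zero_mul,
      add_zero, zero_add]
  have h2 : E * Eᵀ = (S + Sᵀ) * (Sᵀ + S) + Dᵀ * D := by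
    rw [hEdef]
    simp only [Matrix.transpose_add, Matrix.transpose_mul, Matrix.transpose_transpose,
      Matrix.mul_add, Matrix.add_mul, Matrix.mul_assoc, cU, cUp, cUUp, cUpU,
      Matrix.mul_zero, Matrix.zero_mul, add_zero, zero_add]
  have h3 : (Fᵀ * F).trace = (Dᵀ * D).trace := by
    rw [hFdef]
    rw [show (D * Uᵀ)ᵀ * (D * Uᵀ) = U * (Dᵀ * (D * Uᵀ)) from by
      simp only [Matrix.transpose_mul, Matrix.transpose_transpose, Matrix.mul_assoc]]
    rw [Matrix.trace_mul_comm]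
    simp only [Matrix.mul_assoc, hU, cU, Matrix.mul_one]
  -- the four cross terms
  have i11 : (G * (B * H) * (H * (B * G))).trace = (B * (G * (G * (B * (H * H))))).trace := by
    rw [show G * (B * H) * (H * (B * G)) = G * ((B * (H * H)) * (B * G)) from by
      simp only [Matrix.mul_assoc]]
    rw [Matrix.trace_mul_comm]
    rw [show (B * (H * H)) * (B * G) * G = (B * (H * H)) * (B * (G * G)) from by
      simp only [Matrix.mul_assoc]]
    rw [Matrix.trace_mul_comm]
    simp only [Matrix.mul_assoc]
  have i22 : (H * (B * G) * (G * (B * H))).trace = (B * (G * (G * (B * (H * H))))).trace := by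
    rw [show H * (B * G) * (G * (B * H)) = H * (B * (G * (G * (B * H)))) from by
      simp only [Matrix.mul_assoc]]
    rw [Matrix.trace_mul_comm]
    simp only [Matrix.mul_assoc]
  have i12 : (G * (B * H) * (G * (B * H))).trace = (B * B).trace := by
    rw [show G * (B * H) * (G * (B * H)) = G * (B * (H * (G * (B * H)))) from by
      simp only [Matrix.mul_assoc]]
    rw [Matrix.trace_mul_comm]
    simp only [Matrix.mul_assoc, cHG, cGH, hGH, hHG, Matrix.mul_one]
  have i21 : (H * (B * G) * (H * (B * G))).trace = (B * B).trace := by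
    rw [show H * (B * G) * (H * (B * G)) = H * (B * (G * (H * (B * G)))) from by
      simp only [Matrix.mul_assoc]]
    rw [Matrix.trace_mul_comm]
    simp only [Matrix.mul_assoc, cHG, cGH, hGH, hHG, Matrix.mul_one]
  have hK : ((S + Sᵀ) * (Sᵀ + S)).trace
      = (B * B).trace + (B * B).trace
        + ((B * (G * (G * (B * (H * H))))).trace + (B * (G * (G * (B * (H * H))))).trace) := by
    rw [hSt, ← hSGB]
    simp only [Matrix.add_mul, Matrix.mul_add, Matrix.trace_add]
    rw [i11, i12, i21, i22]
    ring
  have hFr : frobSq (U * P * ((U * S + Uperp * D) * (P⁻¹)ᵀ)ᵀ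
        + (U * S + Uperp * D) * (P⁻¹)ᵀ * (U * P)ᵀ)
      = ((B * B).trace + (B * B).trace
        + ((B * (G * (G * (B * (H * H))))).trace + (B * (G * (G * (B * (H * H))))).trace))
        + ((Dᵀ * D).trace + (Dᵀ * D).trace) := by
    rw [hZ]
    unfold frobSq
    rw [h1, Matrix.trace_add, Matrix.trace_mul_comm Eᵀ E, h2, Matrix.trace_add, h3, hK]
    ring
  -- nonnegativity facts
  have nBB : 0 ≤ (B * B).trace := by
    have h := trace_psd_mul_nonneg psdNNt hRpsd
    rwa [idb] at h
  have nA : 0 ≤ (B * (G * (G * (B * (H * H))))).trace := by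
    have h := trace_psd_mul_nonneg psdNtN hRpsd
    rwa [ida] at h
  have nDD : 0 ≤ (Dᵀ * D).trace := by
    have h := trace_psd_mul_nonneg psdLtL hRpsd
    rwa [idd] at h
  -- rewrite the bound hypotheses into canonical scalars
  rw [idc, ida] at bNtN
  rw [idc2, idb] at bNNt
  rw [ide, idd] at bLtL
  rw [idc] at cNtN
  rw [ide] at cLtL
  have hMe : 0 ≤ eigMax Rm * (G * (Dᵀ * (D * G))).trace := mul_nonneg hMax cLtL
  have hMc : 0 ≤ eigMax Rm * (B * (G * (G * B))).trace := mul_nonneg hMax cNtN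
  rw [hT, idSS, idDD, hFr]
  constructor
  · linarith [bNtN.1, bNNt.1, bLtL.1]
  · linarith [bNtN.2, bNNt.2, bLtL.2]
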